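/- Define the class F of formulas in the language {+, ·, <, 0, 1} as the smallest class containing quantifier-free formulas and closed under Boolean connectives and the quantifier Qx φ := ∃z ∀x > z, φ. Then for every F-formula φ(x₁,...,xₘ) and all natural numbers n₁,...,nₘ, ℕ ⊨ φ(n₁,...,nₘ) if and only if ℝ ⊨ φ(n₁,...,nₘ); i.e., ℕ is an F-elementary substructure of the ordered field ℝ. -/

import Mathlib

/-- Terms of the language `{+, ·, 0, 1}` with variables indexed by `ℕ`. -/
inductive OTerm : Type
  | var : ℕ → OTerm
  | zero : OTerm
  | one : OTerm
  | add : OTerm → OTerm → OTerm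
  | mul : OTerm → OTerm → OTerm
  deriving DecidableEq

/-- Evaluation of a term in any structure for the language `{+, ·, 0, 1}`. -/
def OTerm.eval {α : Type*} [Add α] [Mul α] [Zero α] [One α]
    (v : ℕ → α) : OTerm → α
  | .var i => v i
  | .zero => 0
  | .one => 1
  | .add t s => t.eval v + s.eval v
  | .mul t s => t.eval v * s.eval v

/-- The class `F` of formulas: quantifier-free formulas of the language
`{+, ·, <, 0, 1}` closed under Boolean connectives and the quantifier `Q`
("for all sufficiently large"), which binds the variable of the given index. -/
inductive FFormula : Type
  | eq : OTerm → OTerm → FFormula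
  | lt : OTerm → OTerm → FFormula
  | not : FFormula → FFormula
  | and : FFormula → FFormula → FFormula
  | or : FFormula → FFormula → FFormula
  | Q : ℕ → FFormula → FFormula
  deriving DecidableEq

/-- Satisfaction: `Q i φ` holds iff there is `z` such that `φ` holds whenever
the variable `i` is assigned any value `x > z`. -/
def FFormula.Sat (α : Type*) [Add α] [Mul α] [Zero α] [One α] [LT α]
    (v : ℕ → α) : FFormula → Prop
  | .eq t s => t.eval v = s.eval v
  | .lt t s => t.eval v < s.eval v
  | .not φ => ¬ φ.Sat α v
  | .and φ ψ => φ.Sat α v ∧ ψ.Sat α v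
  | .or φ ψ => φ.Sat α v ∨ ψ.Sat α v
  | .Q i φ => ∃ z : α, ∀ x : α, z < x → φ.Sat α (Function.update v i x)

/- chunk 1: coefficient extraction -/
namespace QEaux

open OTerm

/-- pointwise sum of two coefficient lists (with padding) -/
def addL : List OTerm → List OTerm → List OTerm
  | [], m => m
  | l, [] => l
  | a :: l, b :: m => a.add b :: addL l m

def smulL (c : OTerm) (l : List OTerm) : List OTerm := l.map (fun a => c.mul a)

def mulL : List OTerm → List OTerm → List OTerm
  | [], _ => []
  | a :: l, m => addL (smulL a m) (OTerm.zero :: mulL l m)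

/-- coefficient list of a term viewed as polynomial in variable `i` -/
def coeffs (i : ℕ) : OTerm → List OTerm
  | .var j => if j = i then [OTerm.zero, OTerm.one] else [OTerm.var j]
  | .zero => []
  | .one => [OTerm.one]
  | .add t s => addL (coeffs i t) (coeffs i s)
  | .mul t s => mulL (coeffs i t) (coeffs i s)

variable {α : Type*} [CommSemiring α]

/-- Horner evaluation of a coefficient list -/
def evalL (v : ℕ → α) (x : α) : List OTerm → α
  | [] => 0
  | a :: l => a.eval v + x * evalL v x l

@[simp] lemma evalL_nil (v : ℕ → α) (x : α) : evalL v x [] = 0 := rfl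
@[simp] lemma evalL_cons (v : ℕ → α) (x : α) (a : OTerm) (l : List OTerm) :
    evalL v x (a :: l) = a.eval v + x * evalL v x l := rfl

lemma evalL_addL (v : ℕ → α) (x : α) : ∀ l m : List OTerm,
    evalL v x (addL l m) = evalL v x l + evalL v x m
  | [], m => by simp [addL]
  | a :: l, [] => by simp [addL]
  | a :: l, b :: m => by
      simp [addL, evalL_addL v x l m, OTerm.eval]; ring

lemma evalL_smulL (v : ℕ → α) (x : α) (c : OTerm) : ∀ l : List OTerm,
    evalL v x (smulL c l) = c.eval v * evalL v x l
  | [] => by simp [smulL]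
  | a :: l => by
      have ih := evalL_smulL v x c l
      simp only [smulL, List.map_cons, evalL_cons, OTerm.eval] at *
      rw [ih]; ring

lemma evalL_mulL (v : ℕ → α) (x : α) : ∀ l m : List OTerm,
    evalL v x (mulL l m) = evalL v x l * evalL v x m
  | [], m => by simp [mulL]
  | a :: l, m => by
      simp [mulL, evalL_addL, evalL_smulL, evalL_mulL v x l m, OTerm.eval]; ring

/-- Key lemma: evaluating a term where variable `i` is set to `x` equals
the Horner evaluation of its coefficient list. -/
lemma eval_update (v : ℕ → α) (i : ℕ) (x : α) : ∀ t : OTerm,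
    t.eval (Function.update v i x) = evalL v x (coeffs i t)
  | .var j => by
      by_cases h : j = i
      · subst h; simp [coeffs, OTerm.eval, evalL]
      · simp [coeffs, h, OTerm.eval, evalL, Function.update_of_ne h]
  | .zero => by simp [coeffs, OTerm.eval]
  | .one => by simp [coeffs, OTerm.eval, evalL]
  | .add t s => by
      simp [coeffs, OTerm.eval, evalL_addL, eval_update v i x t, eval_update v i x s]
  | .mul t s => by
      simp [coeffs, OTerm.eval, evalL_mulL, eval_update v i x t, eval_update v i x s]

end QEaux
/- chunk 2: real polynomial core -/
namespace QEaux
open Polynomial Filter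

/-- list of values to polynomial -/
noncomputable def LP : List ℝ → Polynomial ℝ
  | [] => 0
  | a :: l => Polynomial.C a + Polynomial.X * LP l

lemma LP_coeff : ∀ (l : List ℝ) (j : ℕ), (LP l).coeff j = l.getD j 0
  | [], j => by simp [LP]
  | a :: l, 0 => by simp [LP]
  | a :: l, j + 1 => by
      simp only [LP, Polynomial.coeff_add, Polynomial.coeff_C_succ,
        Polynomial.coeff_X_mul, LP_coeff l j, List.getD_cons_succ, zero_add]

lemma LP_eval (x : ℝ) (v : ℕ → ℝ) : ∀ l : List OTerm,
    (LP (l.map (fun t => t.eval v))).eval x = evalL v x l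
  | [] => by simp [LP]
  | a :: l => by simp [LP, LP_eval x v l]

def EqAll (l m : List ℝ) : Prop := ∀ j, l.getD j 0 = m.getD j 0

def LexLt (l m : List ℝ) : Prop :=
  ∃ j, l.getD j 0 < m.getD j 0 ∧ ∀ k, j < k → l.getD k 0 = m.getD k 0

lemma coeff_sub_LP (l m : List ℝ) (j : ℕ) :
    (LP m - LP l).coeff j = m.getD j 0 - l.getD j 0 := by
  rw [Polynomial.coeff_sub, LP_coeff, LP_coeff]

lemma trichotomy (l m : List ℝ) : LexLt l m ∨ EqAll l m ∨ LexLt m l := by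
  by_cases h0 : LP m - LP l = 0
  · refine Or.inr (Or.inl fun j => ?_)
    have h : m.getD j 0 - l.getD j 0 = 0 := by
      rw [← coeff_sub_LP, h0, Polynomial.coeff_zero]
    linarith
  · set p : Polynomial ℝ := LP m - LP l with hp
    have hne : p.coeff p.natDegree ≠ 0 := by
      have := Polynomial.leadingCoeff_ne_zero.mpr h0
      rwa [Polynomial.leadingCoeff] at this
    have hhigh : ∀ k, p.natDegree < k → l.getD k 0 = m.getD k 0 := by
      intro k hk
      have h2 := Polynomial.coeff_eq_zero_of_natDegree_lt (p := p) hk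
      rw [coeff_sub_LP] at h2
      linarith
    have hd := coeff_sub_LP l m p.natDegree
    rcases lt_or_gt_of_ne hne with hneg | hpos
    · exact Or.inr (Or.inr ⟨p.natDegree, by linarith, fun k hk => (hhigh k hk).symm⟩)
    · exact Or.inl ⟨p.natDegree, by linarith, hhigh⟩

lemma ev_eq_of_eqAll {l m : List ℝ} (h : EqAll l m) :
    ∃ z : ℝ, ∀ x : ℝ, z < x → (LP l).eval x = (LP m).eval x := by
  have : LP l = LP m := Polynomial.ext fun j => by rw [LP_coeff, LP_coeff]; exact h j
  exact ⟨0, fun x _ => by rw [this]⟩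

lemma ev_lt_of_lexLt {l m : List ℝ} (h : LexLt l m) :
    ∃ z : ℝ, ∀ x : ℝ, z < x → (LP l).eval x < (LP m).eval x := by
  obtain ⟨j, hj, hk⟩ := h
  set p : Polynomial ℝ := LP m - LP l with hp
  have hcj : p.coeff j = m.getD j 0 - l.getD j 0 := coeff_sub_LP l m j
  have hcjpos : 0 < p.coeff j := by rw [hcj]; linarith
  have hhigh : ∀ k, j < k → p.coeff k = 0 := by
    intro k hk'
    rw [coeff_sub_LP, hk k hk', sub_self]
  have hdeg : p.natDegree = j :=
    le_antisymm (Polynomial.natDegree_le_iff_coeff_eq_zero.mpr hhigh)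
      (Polynomial.le_natDegree_of_ne_zero (ne_of_gt hcjpos))
  have hlead : 0 < p.leadingCoeff := by
    rw [Polynomial.leadingCoeff, hdeg]; exact hcjpos
  have hev : ∀ᶠ x in atTop, 0 < p.eval x := by
    rcases Nat.eq_zero_or_pos p.natDegree with h0 | h0
    · have hpC : p = Polynomial.C (p.coeff 0) := Polynomial.eq_C_of_natDegree_eq_zero h0
      refine Eventually.of_forall fun x => ?_
      rw [hpC, Polynomial.eval_C]
      rw [hdeg] at h0; rw [h0] at hcjpos; exact hcjpos
    · have hdeg' : 0 < p.degree := Polynomial.natDegree_pos_iff_degree_pos.mp h0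
      exact (Polynomial.tendsto_atTop_of_leadingCoeff_nonneg p hdeg' hlead.le).eventually_gt_atTop 0
  obtain ⟨z, hz⟩ := eventually_atTop.mp hev
  refine ⟨z, fun x hx => ?_⟩
  have h2 := hz x hx.le
  rw [hp, Polynomial.eval_sub] at h2
  linarith

lemma eqAll_of_ev_eq {l m : List ℝ}
    (h : ∃ z : ℝ, ∀ x : ℝ, z < x → (LP l).eval x = (LP m).eval x) : EqAll l m := by
  obtain ⟨z, hz⟩ := h
  have heq : LP l = LP m := by
    apply Polynomial.eq_of_infinite_eval_eq
    exact Set.Infinite.mono (fun x hx => hz x hx) (Set.Ioi_infinite z)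
  intro j
  rw [← LP_coeff, ← LP_coeff, heq]

lemma exists_both {A B : ℝ → Prop} (h1 : ∃ z : ℝ, ∀ x, z < x → A x)
    (h2 : ∃ z : ℝ, ∀ x, z < x → B x) : ∃ x, A x ∧ B x := by
  obtain ⟨z1, h1⟩ := h1; obtain ⟨z2, h2⟩ := h2
  refine ⟨max z1 z2 + 1, h1 _ ?_, h2 _ ?_⟩
  · have := le_max_left z1 z2; linarith
  · have := le_max_right z1 z2; linarith

lemma lexLt_of_ev_lt {l m : List ℝ}
    (h : ∃ z : ℝ, ∀ x : ℝ, z < x → (LP l).eval x < (LP m).eval x) : LexLt l m := by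
  rcases trichotomy l m with h1 | h1 | h1
  · exact h1
  · obtain ⟨x, hx1, hx2⟩ := exists_both h (ev_eq_of_eqAll h1)
    exact absurd hx2 (ne_of_lt hx1)
  · obtain ⟨x, hx1, hx2⟩ := exists_both h (ev_lt_of_lexLt h1)
    exact absurd hx2 (not_lt.mpr hx1.le)

end QEaux
/- chunk 3: quantifier-free formulas, conjunctions/disjunctions, elimination -/
namespace QEaux

def QFree : FFormula → Prop
  | .eq _ _ => True
  | .lt _ _ => True
  | .not φ => QFree φ
  | .and φ ψ => QFree φ ∧ QFree ψ
  | .or φ ψ => QFree φ ∧ QFree ψ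
  | .Q _ _ => False

def conj (l : List FFormula) : FFormula := l.foldr FFormula.and (.eq .zero .zero)
def disj (l : List FFormula) : FFormula := l.foldr FFormula.or (.lt .zero .zero)

variable {α : Type*} [CommSemiring α] [LinearOrder α] [IsStrictOrderedRing α]

lemma sat_conj (v : ℕ → α) : ∀ l : List FFormula,
    (conj l).Sat α v ↔ ∀ φ ∈ l, φ.Sat α v
  | [] => by simp [conj, List.foldr, FFormula.Sat, OTerm.eval]
  | φ :: l => by
      simp only [conj, List.foldr] at *
      show (FFormula.and φ _).Sat α v ↔ _
      rw [show (FFormula.and φ (l.foldr FFormula.and (.eq .zero .zero))).Sat α v =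
        (φ.Sat α v ∧ (conj l).Sat α v) from rfl, sat_conj v l]
      simp

lemma sat_disj (v : ℕ → α) : ∀ l : List FFormula,
    (disj l).Sat α v ↔ ∃ φ ∈ l, φ.Sat α v
  | [] => by simp [disj, List.foldr, FFormula.Sat, OTerm.eval]
  | φ :: l => by
      rw [show (disj (φ :: l)).Sat α v = (φ.Sat α v ∨ (disj l).Sat α v) from rfl,
        sat_disj v l]
      simp

lemma qfree_conj : ∀ l : List FFormula, (∀ φ ∈ l, QFree φ) → QFree (conj l)
  | [], _ => trivial
  | φ :: l, h => ⟨h φ (by simp), qfree_conj l fun ψ hψ => h ψ (by simp [hψ])⟩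

lemma qfree_disj : ∀ l : List FFormula, (∀ φ ∈ l, QFree φ) → QFree (disj l)
  | [], _ => trivial
  | φ :: l, h => ⟨h φ (by simp), qfree_disj l fun ψ hψ => h ψ (by simp [hψ])⟩

/-- the `j`-th coefficient term, defaulting to `zero` -/
def nthT (l : List OTerm) (j : ℕ) : OTerm := l.getD j .zero

lemma eval_nthT (v : ℕ → α) : ∀ (l : List OTerm) (j : ℕ),
    (nthT l j).eval v = (l.map (fun t => t.eval v)).getD j 0
  | [], j => by simp [nthT, OTerm.eval]
  | a :: l, 0 => by simp [nthT]
  | a :: l, j + 1 => by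
      simpa [nthT] using eval_nthT v l j

/-- formula expressing that coefficient lists `a` and `b` agree from index `j+1` up to `n` -/
def eqAbove (a b : List OTerm) (n j : ℕ) : FFormula :=
  conj (((List.range n).filter (fun k => j < k)).map fun k => .eq (nthT a k) (nthT b k))

/-- formula expressing eventual equality -/
def eqF (a b : List OTerm) (n : ℕ) : FFormula :=
  conj ((List.range n).map fun j => .eq (nthT a j) (nthT b j))

/-- formula expressing eventual strict inequality (lexicographic comparison) -/
def ltF (a b : List OTerm) (n : ℕ) : FFormula :=
  disj ((List.range n).map fun j => .and (.lt (nthT a j) (nthT b j)) (eqAbove a b n j))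

lemma qfree_eqAbove (a b : List OTerm) (n j : ℕ) : QFree (eqAbove a b n j) :=
  qfree_conj _ (by intro φ hφ; simp at hφ; obtain ⟨k, _, rfl⟩ := hφ; trivial)

lemma qfree_eqF (a b : List OTerm) (n : ℕ) : QFree (eqF a b n) :=
  qfree_conj _ (by intro φ hφ; simp at hφ; obtain ⟨k, _, rfl⟩ := hφ; trivial)

lemma qfree_ltF (a b : List OTerm) (n : ℕ) : QFree (ltF a b n) :=
  qfree_disj _ (by
    intro φ hφ; simp at hφ; obtain ⟨k, _, rfl⟩ := hφ
    exact ⟨trivial, qfree_eqAbove a b n k⟩)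

/-- eliminate the quantifier `Q i` in front of a quantifier-free formula -/
def elimQ (i : ℕ) : FFormula → FFormula
  | .eq t s => eqF (coeffs i t) (coeffs i s)
      (max (coeffs i t).length (coeffs i s).length)
  | .lt t s => ltF (coeffs i t) (coeffs i s)
      (max (coeffs i t).length (coeffs i s).length)
  | .not φ => .not (elimQ i φ)
  | .and φ ψ => .and (elimQ i φ) (elimQ i ψ)
  | .or φ ψ => .or (elimQ i φ) (elimQ i ψ)
  | .Q _ _ => .eq .zero .zero

lemma qfree_elimQ (i : ℕ) : ∀ φ : FFormula, QFree (elimQ i φ)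
  | .eq t s => qfree_eqF _ _ _
  | .lt t s => qfree_ltF _ _ _
  | .not φ => qfree_elimQ i φ
  | .and φ ψ => ⟨qfree_elimQ i φ, qfree_elimQ i ψ⟩
  | .or φ ψ => ⟨qfree_elimQ i φ, qfree_elimQ i ψ⟩
  | .Q _ _ => trivial

end QEaux
/- chunk 4: correctness of elimQ over ℝ -/
namespace QEaux

/-- "eventually satisfied" for large values of variable `i` -/
def EvSat (α : Type*) [Add α] [Mul α] [Zero α] [One α] [LT α]
    (v : ℕ → α) (i : ℕ) (φ : FFormula) : Prop :=
  ∃ z : α, ∀ x : α, z < x → φ.Sat α (Function.update v i x)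

lemma sat_Q_iff {α : Type*} [Add α] [Mul α] [Zero α] [One α] [LT α]
    (v : ℕ → α) (i : ℕ) (φ : FFormula) :
    (FFormula.Q i φ).Sat α v ↔ EvSat α v i φ := Iff.rfl

lemma sat_eqF (v : ℕ → ℝ) (a b : List OTerm) :
    (eqF a b (max a.length b.length)).Sat ℝ v ↔
      EqAll (a.map (fun t => t.eval v)) (b.map (fun t => t.eval v)) := by
  set n := max a.length b.length with hn
  rw [eqF, sat_conj]
  constructor
  · intro h j
    by_cases hj : j < n
    · have := h (.eq (nthT a j) (nthT b j)) (by simp only [List.mem_map, List.mem_range]; exact ⟨j, hj, rfl⟩)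
      rw [show (FFormula.eq (nthT a j) (nthT b j)).Sat ℝ v =
        ((nthT a j).eval v = (nthT b j).eval v) from rfl, eval_nthT, eval_nthT] at this
      exact this
    · push_neg at hj
      rw [List.getD_eq_default, List.getD_eq_default]
      · simpa using le_trans (le_max_right _ _) hj
      · simpa using le_trans (le_max_left _ _) hj
  · intro h φ hφ
    simp only [List.mem_map, List.mem_range] at hφ
    obtain ⟨j, _, rfl⟩ := hφ
    show (nthT a j).eval v = (nthT b j).eval v
    rw [eval_nthT, eval_nthT]; exact h j

lemma sat_eqAbove (v : ℕ → ℝ) (a b : List OTerm) (j : ℕ) :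
    (eqAbove a b (max a.length b.length) j).Sat ℝ v ↔
      ∀ k, j < k → (a.map (fun t => t.eval v)).getD k 0 =
        (b.map (fun t => t.eval v)).getD k 0 := by
  set n := max a.length b.length with hn
  rw [eqAbove, sat_conj]
  constructor
  · intro h k hk
    by_cases hkn : k < n
    · have := h (.eq (nthT a k) (nthT b k)) (by
        simp only [List.mem_map, List.mem_filter, List.mem_range]
        exact ⟨k, ⟨hkn, by simpa using hk⟩, rfl⟩)
      rw [show (FFormula.eq (nthT a k) (nthT b k)).Sat ℝ v =
        ((nthT a k).eval v = (nthT b k).eval v) from rfl, eval_nthT, eval_nthT] at this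
      exact this
    · push_neg at hkn
      rw [List.getD_eq_default, List.getD_eq_default]
      · simpa using le_trans (le_max_right _ _) hkn
      · simpa using le_trans (le_max_left _ _) hkn
  · intro h φ hφ
    simp only [List.mem_map, List.mem_filter, List.mem_range, decide_eq_true_eq] at hφ
    obtain ⟨k, ⟨_, hk⟩, rfl⟩ := hφ
    show (nthT a k).eval v = (nthT b k).eval v
    rw [eval_nthT, eval_nthT]; exact h k hk

lemma sat_ltF (v : ℕ → ℝ) (a b : List OTerm) :
    (ltF a b (max a.length b.length)).Sat ℝ v ↔
      LexLt (a.map (fun t => t.eval v)) (b.map (fun t => t.eval v)) := by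
  set n := max a.length b.length with hn
  rw [ltF, sat_disj]
  constructor
  · intro h
    obtain ⟨φ, hφ, hsat⟩ := h
    simp only [List.mem_map, List.mem_range] at hφ
    obtain ⟨j, _, rfl⟩ := hφ
    obtain ⟨h1, h2⟩ := hsat
    refine ⟨j, ?_, (sat_eqAbove v a b j).mp h2⟩
    have : (nthT a j).eval v < (nthT b j).eval v := h1
    rwa [eval_nthT, eval_nthT] at this
  · rintro ⟨j, hj, hk⟩
    have hjn : j < n := by
      by_contra hc
      push_neg at hc
      rw [List.getD_eq_default, List.getD_eq_default] at hj
      · exact lt_irrefl _ hj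
      · simpa using le_trans (le_max_right _ _) hc
      · simpa using le_trans (le_max_left _ _) hc
    refine ⟨.and (.lt (nthT a j) (nthT b j)) (eqAbove a b n j),
      by simp only [List.mem_map, List.mem_range]; exact ⟨j, hjn, rfl⟩, ?_, ?_⟩
    · show (nthT a j).eval v < (nthT b j).eval v
      rw [eval_nthT, eval_nthT]; exact hj
    · exact (sat_eqAbove v a b j).mpr hk

/-- atomic satisfaction at an updated assignment, via polynomial evaluation -/
lemma sat_eq_update (v : ℕ → ℝ) (i : ℕ) (x : ℝ) (t s : OTerm) :
    (FFormula.eq t s).Sat ℝ (Function.update v i x) ↔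
      (LP ((coeffs i t).map (fun u => u.eval v))).eval x =
      (LP ((coeffs i s).map (fun u => u.eval v))).eval x := by
  show t.eval _ = s.eval _ ↔ _
  rw [eval_update, eval_update, LP_eval, LP_eval]

lemma sat_lt_update (v : ℕ → ℝ) (i : ℕ) (x : ℝ) (t s : OTerm) :
    (FFormula.lt t s).Sat ℝ (Function.update v i x) ↔
      (LP ((coeffs i t).map (fun u => u.eval v))).eval x <
      (LP ((coeffs i s).map (fun u => u.eval v))).eval x := by
  show t.eval _ < s.eval _ ↔ _
  rw [eval_update, eval_update, LP_eval, LP_eval]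

/-- Main correctness of one-step elimination over `ℝ`, together with
eventual constancy. -/
theorem elim_correct (i : ℕ) : ∀ φ : FFormula, QFree φ → ∀ v : ℕ → ℝ,
    ((elimQ i φ).Sat ℝ v ↔ EvSat ℝ v i φ) ∧ (EvSat ℝ v i φ ∨ EvSat ℝ v i φ.not)
  | .eq t s, _, v => by
    set la := (coeffs i t).map (fun u => u.eval v)
    set lb := (coeffs i s).map (fun u => u.eval v)
    have hiff : EvSat ℝ v i (.eq t s) ↔ EqAll la lb := by
      constructor
      · intro ⟨z, hz⟩
        exact eqAll_of_ev_eq ⟨z, fun x hx => (sat_eq_update v i x t s).mp (hz x hx)⟩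
      · intro h
        obtain ⟨z, hz⟩ := ev_eq_of_eqAll h
        exact ⟨z, fun x hx => (sat_eq_update v i x t s).mpr (hz x hx)⟩
    constructor
    · rw [show elimQ i (.eq t s) = eqF (coeffs i t) (coeffs i s)
        (max (coeffs i t).length (coeffs i s).length) from rfl, sat_eqF, hiff]
    · rcases trichotomy la lb with h | h | h
      · right
        obtain ⟨z, hz⟩ := ev_lt_of_lexLt h
        exact ⟨z, fun x hx => ne_of_lt ((sat_lt_update v i x t s).mpr (hz x hx))⟩
      · exact Or.inl (hiff.mpr h)
      · right
        obtain ⟨z, hz⟩ := ev_lt_of_lexLt h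
        exact ⟨z, fun x hx => ne_of_gt ((sat_lt_update v i x s t).mpr (hz x hx))⟩
  | .lt t s, _, v => by
    set la := (coeffs i t).map (fun u => u.eval v)
    set lb := (coeffs i s).map (fun u => u.eval v)
    have hiff : EvSat ℝ v i (.lt t s) ↔ LexLt la lb := by
      constructor
      · intro ⟨z, hz⟩
        exact lexLt_of_ev_lt ⟨z, fun x hx => (sat_lt_update v i x t s).mp (hz x hx)⟩
      · intro h
        obtain ⟨z, hz⟩ := ev_lt_of_lexLt h
        exact ⟨z, fun x hx => (sat_lt_update v i x t s).mpr (hz x hx)⟩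
    constructor
    · rw [show elimQ i (.lt t s) = ltF (coeffs i t) (coeffs i s)
        (max (coeffs i t).length (coeffs i s).length) from rfl, sat_ltF, hiff]
    · rcases trichotomy la lb with h | h | h
      · exact Or.inl (hiff.mpr h)
      · right
        obtain ⟨z, hz⟩ := ev_eq_of_eqAll h
        refine ⟨z, fun x hx => ?_⟩
        have h2 : t.eval (Function.update v i x) = s.eval (Function.update v i x) :=
          (sat_eq_update v i x t s).mpr (hz x hx)
        show ¬ t.eval (Function.update v i x) < s.eval (Function.update v i x)
        exact not_lt.mpr (le_of_eq h2.symm)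
      · right
        obtain ⟨z, hz⟩ := ev_lt_of_lexLt h
        exact ⟨z, fun x hx => not_lt_of_gt ((sat_lt_update v i x s t).mpr (hz x hx))⟩
  | .not φ, hq, v => by
    obtain ⟨hiff, hconst⟩ := elim_correct i φ hq v
    constructor
    · show ¬ (elimQ i φ).Sat ℝ v ↔ _
      rw [hiff]
      constructor
      · intro h
        rcases hconst with h1 | h1
        · exact absurd h1 h
        · exact h1
      · rintro ⟨z, hz⟩ ⟨z', hz'⟩
        have h1 := hz (max z z' + 1) (by have := le_max_left z z'; linarith)
        have h2 := hz' (max z z' + 1) (by have := le_max_right z z'; linarith)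
        exact h1 h2
    · rcases hconst with h1 | h1
      · right
        obtain ⟨z, hz⟩ := h1
        exact ⟨z, fun x hx => not_not_intro (hz x hx)⟩
      · exact Or.inl h1
  | .and φ ψ, hq, v => by
    obtain ⟨hiff1, hconst1⟩ := elim_correct i φ hq.1 v
    obtain ⟨hiff2, hconst2⟩ := elim_correct i ψ hq.2 v
    have hand : EvSat ℝ v i (.and φ ψ) ↔ EvSat ℝ v i φ ∧ EvSat ℝ v i ψ := by
      constructor
      · rintro ⟨z, hz⟩
        exact ⟨⟨z, fun x hx => (hz x hx).1⟩, ⟨z, fun x hx => (hz x hx).2⟩⟩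
      · rintro ⟨⟨z1, h1⟩, ⟨z2, h2⟩⟩
        refine ⟨max z1 z2, fun x hx => ⟨h1 x ?_, h2 x ?_⟩⟩
        · exact lt_of_le_of_lt (le_max_left z1 z2) hx
        · exact lt_of_le_of_lt (le_max_right z1 z2) hx
    constructor
    · show (elimQ i φ).Sat ℝ v ∧ (elimQ i ψ).Sat ℝ v ↔ _
      rw [hiff1, hiff2, hand]
    · rcases hconst1 with h1 | h1
      · rcases hconst2 with h2 | h2
        · exact Or.inl (hand.mpr ⟨h1, h2⟩)
        · right
          obtain ⟨z, hz⟩ := h2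
          exact ⟨z, fun x hx h => hz x hx h.2⟩
      · right
        obtain ⟨z, hz⟩ := h1
        exact ⟨z, fun x hx h => hz x hx h.1⟩
  | .or φ ψ, hq, v => by
    obtain ⟨hiff1, hconst1⟩ := elim_correct i φ hq.1 v
    obtain ⟨hiff2, hconst2⟩ := elim_correct i ψ hq.2 v
    have hor : EvSat ℝ v i (.or φ ψ) ↔ EvSat ℝ v i φ ∨ EvSat ℝ v i ψ := by
      constructor
      · rintro ⟨z, hz⟩
        rcases hconst1 with h1 | h1
        · exact Or.inl h1
        · right
          obtain ⟨z1, h1⟩ := h1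
          refine ⟨max z z1, fun x hx => ?_⟩
          have hx1 : z < x := lt_of_le_of_lt (le_max_left z z1) hx
          have hx2 : z1 < x := lt_of_le_of_lt (le_max_right z z1) hx
          rcases hz x hx1 with h | h
          · exact absurd h (h1 x hx2)
          · exact h
      · rintro (⟨z, hz⟩ | ⟨z, hz⟩)
        · exact ⟨z, fun x hx => Or.inl (hz x hx)⟩
        · exact ⟨z, fun x hx => Or.inr (hz x hx)⟩
    constructor
    · show (elimQ i φ).Sat ℝ v ∨ (elimQ i ψ).Sat ℝ v ↔ _
      rw [hiff1, hiff2, hor]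
    · rcases hconst1 with h1 | h1
      · exact Or.inl (hor.mpr (Or.inl h1))
      · rcases hconst2 with h2 | h2
        · exact Or.inl (hor.mpr (Or.inr h2))
        · right
          obtain ⟨z1, hz1⟩ := h1
          obtain ⟨z2, hz2⟩ := h2
          refine ⟨max z1 z2, fun x hx => ?_⟩
          have hx1 : z1 < x := lt_of_le_of_lt (le_max_left z1 z2) hx
          have hx2 : z2 < x := lt_of_le_of_lt (le_max_right z1 z2) hx
          rintro (h | h)
          · exact hz1 x hx1 h
          · exact hz2 x hx2 h
  | .Q _ _, hq, v => absurd hq not_false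

end QEaux
/- chunk 5: transfer between ℕ and ℝ, full elimination, main theorem -/
namespace QEaux

lemma eval_cast (v : ℕ → ℕ) : ∀ t : OTerm,
    ((t.eval v : ℕ) : ℝ) = t.eval (fun j => ((v j : ℕ) : ℝ))
  | .var j => rfl
  | .zero => by simp [OTerm.eval]
  | .one => by simp [OTerm.eval]
  | .add t s => by
      simp only [OTerm.eval, Nat.cast_add, eval_cast v t, eval_cast v s]
  | .mul t s => by
      simp only [OTerm.eval, Nat.cast_mul, eval_cast v t, eval_cast v s]

/-- transfer of quantifier-free formulas -/
lemma qf_transfer : ∀ φ : FFormula, QFree φ → ∀ v : ℕ → ℕ,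
    (φ.Sat ℕ v ↔ φ.Sat ℝ (fun j => ((v j : ℕ) : ℝ)))
  | .eq t s, _, v => by
      show t.eval v = s.eval v ↔ t.eval _ = s.eval _
      rw [← eval_cast, ← eval_cast, Nat.cast_inj]
  | .lt t s, _, v => by
      show t.eval v < s.eval v ↔ t.eval _ < s.eval _
      rw [← eval_cast, ← eval_cast, Nat.cast_lt]
  | .not φ, hq, v => by
      show ¬ _ ↔ ¬ _
      rw [qf_transfer φ hq v]
  | .and φ ψ, hq, v => by
      show _ ∧ _ ↔ _ ∧ _
      rw [qf_transfer φ hq.1 v, qf_transfer ψ hq.2 v]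
  | .or φ ψ, hq, v => by
      show _ ∨ _ ↔ _ ∨ _
      rw [qf_transfer φ hq.1 v, qf_transfer ψ hq.2 v]
  | .Q _ _, hq, _ => absurd hq not_false

lemma update_cast (v : ℕ → ℕ) (i : ℕ) (x : ℕ) :
    (fun j => (((Function.update v i x) j : ℕ) : ℝ)) =
      Function.update (fun j => ((v j : ℕ) : ℝ)) i (x : ℝ) := by
  funext j
  by_cases h : j = i
  · subst h; simp
  · simp [Function.update_of_ne h]

/-- eventual satisfaction transfers between ℕ and ℝ for QF formulas -/
lemma ev_transfer (φ : FFormula) (hq : QFree φ) (v : ℕ → ℕ) (i : ℕ) :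
    EvSat ℕ v i φ ↔ EvSat ℝ (fun j => ((v j : ℕ) : ℝ)) i φ := by
  have back : ∀ ψ : FFormula, QFree ψ →
      EvSat ℝ (fun j => ((v j : ℕ) : ℝ)) i ψ → EvSat ℕ v i ψ := by
    rintro ψ hψ ⟨z, hz⟩
    obtain ⟨n, hn⟩ := exists_nat_gt z
    refine ⟨n, fun x hx => ?_⟩
    have hzx : z < (x : ℝ) := lt_trans hn (by exact_mod_cast hx)
    have := hz (x : ℝ) hzx
    rw [← update_cast v i x] at this
    exact (qf_transfer ψ hψ (Function.update v i x)).mpr this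
  constructor
  · intro h
    rcases (elim_correct i φ hq (fun j => ((v j : ℕ) : ℝ))).2 with h1 | h1
    · exact h1
    · exfalso
      obtain ⟨z1, hz1⟩ := h
      obtain ⟨z2, hz2⟩ := back φ.not hq h1
      have hx1 : z1 < max z1 z2 + 1 := by have := le_max_left z1 z2; omega
      have hx2 : z2 < max z1 z2 + 1 := by have := le_max_right z1 z2; omega
      exact (hz2 _ hx2) (hz1 _ hx1)
  · exact back φ hq

/-- full elimination of all Q quantifiers -/
def qfOf : FFormula → FFormula
  | .eq t s => .eq t s
  | .lt t s => .lt t s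
  | .not φ => .not (qfOf φ)
  | .and φ ψ => .and (qfOf φ) (qfOf ψ)
  | .or φ ψ => .or (qfOf φ) (qfOf ψ)
  | .Q i φ => elimQ i (qfOf φ)

lemma qfree_qfOf : ∀ φ : FFormula, QFree (qfOf φ)
  | .eq _ _ => trivial
  | .lt _ _ => trivial
  | .not φ => qfree_qfOf φ
  | .and φ ψ => ⟨qfree_qfOf φ, qfree_qfOf ψ⟩
  | .or φ ψ => ⟨qfree_qfOf φ, qfree_qfOf ψ⟩
  | .Q i φ => qfree_elimQ i (qfOf φ)

lemma qfOf_real : ∀ φ : FFormula, ∀ v : ℕ → ℝ, (qfOf φ).Sat ℝ v ↔ φ.Sat ℝ v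
  | .eq _ _, v => Iff.rfl
  | .lt _ _, v => Iff.rfl
  | .not φ, v => by
      show ¬ _ ↔ ¬ _
      rw [qfOf_real φ v]
  | .and φ ψ, v => by
      show _ ∧ _ ↔ _ ∧ _
      rw [qfOf_real φ v, qfOf_real ψ v]
  | .or φ ψ, v => by
      show _ ∨ _ ↔ _ ∨ _
      rw [qfOf_real φ v, qfOf_real ψ v]
  | .Q i φ, v => by
      show (elimQ i (qfOf φ)).Sat ℝ v ↔ EvSat ℝ v i φ
      rw [(elim_correct i (qfOf φ) (qfree_qfOf φ) v).1]
      constructor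
      · rintro ⟨z, hz⟩
        exact ⟨z, fun x hx => (qfOf_real φ _).mp (hz x hx)⟩
      · rintro ⟨z, hz⟩
        exact ⟨z, fun x hx => (qfOf_real φ _).mpr (hz x hx)⟩

lemma qfOf_nat : ∀ φ : FFormula, ∀ v : ℕ → ℕ, (qfOf φ).Sat ℕ v ↔ φ.Sat ℕ v
  | .eq _ _, v => Iff.rfl
  | .lt _ _, v => Iff.rfl
  | .not φ, v => by
      show ¬ _ ↔ ¬ _
      rw [qfOf_nat φ v]
  | .and φ ψ, v => by
      show _ ∧ _ ↔ _ ∧ _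
      rw [qfOf_nat φ v, qfOf_nat ψ v]
  | .or φ ψ, v => by
      show _ ∨ _ ↔ _ ∨ _
      rw [qfOf_nat φ v, qfOf_nat ψ v]
  | .Q i φ, v => by
      show (elimQ i (qfOf φ)).Sat ℕ v ↔ EvSat ℕ v i φ
      rw [qf_transfer _ (qfree_elimQ i (qfOf φ)) v,
        (elim_correct i (qfOf φ) (qfree_qfOf φ) _).1,
        ← ev_transfer (qfOf φ) (qfree_qfOf φ) v i]
      constructor
      · rintro ⟨z, hz⟩
        exact ⟨z, fun x hx => (qfOf_nat φ _).mp (hz x hx)⟩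
      · rintro ⟨z, hz⟩
        exact ⟨z, fun x hx => (qfOf_nat φ _).mpr (hz x hx)⟩

end QEaux

/-- `ℕ` is an `F`-elementary substructure of `ℝ`. -/
theorem nat_F_elementary_substructure_real (φ : FFormula) (v : ℕ → ℕ) :
    φ.Sat ℕ v ↔ φ.Sat ℝ (fun i => ((v i : ℕ) : ℝ)) := by
  rw [← QEaux.qfOf_nat φ v,
    QEaux.qf_transfer (QEaux.qfOf φ) (QEaux.qfree_qfOf φ) v,
    QEaux.qfOf_real]
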